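/- For all integers m ≥ 0 and real parameters q, μ, y with 0 < q < 1, the sum over l from 0 to m of φ(l|m) equals 1, where φ(l|m) = y^l · (μ;q)_l · (y;q)_{m-l} / (μy;q)_m · [m choose l]_q. -/

import Mathlib

noncomputable def qPoch (z q : ℝ) (m : ℕ) : ℝ := ∏ j ∈ Finset.range m, (1 - z * q ^ j)

noncomputable def qBinom (q : ℝ) (m l : ℕ) : ℝ :=
  if l ≤ m then qPoch q q m / (qPoch q q l * qPoch q q (m - l)) else 0

noncomputable def phi (q μ y : ℝ) (l m : ℕ) : ℝ :=
  y ^ l * qPoch μ q l * qPoch y q (m - l) / qPoch (μ * y) q m * qBinom q m l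

lemma qPoch_zero (z q : ℝ) : qPoch z q 0 = 1 := by simp [qPoch]

lemma qPoch_succ (z q : ℝ) (m : ℕ) :
    qPoch z q (m + 1) = qPoch z q m * (1 - z * q ^ m) := by
  simp [qPoch, Finset.prod_range_succ]

lemma qq_pos (q : ℝ) (hq0 : 0 < q) (hq1 : q < 1) (n : ℕ) : 0 < qPoch q q n := by
  apply Finset.prod_pos
  intro j _
  have h1 : q ^ j ≤ 1 := pow_le_one₀ hq0.le hq1.le
  nlinarith

lemma qq_ne (q : ℝ) (hq0 : 0 < q) (hq1 : q < 1) (n : ℕ) : qPoch q q n ≠ 0 :=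
  (qq_pos q hq0 hq1 n).ne'

lemma qBinom_zero (q : ℝ) (hq0 : 0 < q) (hq1 : q < 1) (n : ℕ) : qBinom q n 0 = 1 := by
  simp [qBinom, qPoch_zero, div_self (qq_ne q hq0 hq1 n)]

lemma qBinom_gt (q : ℝ) (m l : ℕ) (h : m < l) : qBinom q m l = 0 := by
  simp [qBinom, Nat.not_le.mpr h]

lemma qBinom_pascal (q : ℝ) (hq0 : 0 < q) (hq1 : q < 1) (m l : ℕ) (hl : l ≤ m) :
    qBinom q (m + 1) (l + 1) = qBinom q m (l + 1) + q ^ (m - l) * qBinom q m l := by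
  rcases eq_or_lt_of_le hl with rfl | hlt
  · rw [qBinom_gt q l (l + 1) (Nat.lt_succ_self l)]
    simp only [qBinom, le_refl, if_pos, Nat.sub_self, Nat.succ_sub_succ]
    rw [qPoch_zero, mul_one, mul_one, div_self (qq_ne q hq0 hq1 (l + 1)),
        div_self (qq_ne q hq0 hq1 l)]
    ring
  · obtain ⟨k, rfl⟩ : ∃ k, m = l + 1 + k := ⟨m - (l + 1), by omega⟩
    have e1 : l + 1 + k + 1 - (l + 1) = k + 1 := by omega
    have e2 : l + 1 + k - (l + 1) = k := by omega
    have e3 : l + 1 + k - l = k + 1 := by omega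
    simp only [qBinom, if_pos (by omega : l + 1 ≤ l + 1 + k + 1),
      if_pos (by omega : l + 1 ≤ l + 1 + k), if_pos (by omega : l ≤ l + 1 + k), e1, e2, e3]
    have h2 : l + 1 + k + 1 = (l + 1 + k) + 1 := rfl
    rw [h2, qPoch_succ q q (l + 1 + k), qPoch_succ q q k, qPoch_succ q q l]
    have nl := qq_ne q hq0 hq1 l
    have nk := qq_ne q hq0 hq1 k
    have nl1 : (1 : ℝ) - q * q ^ l ≠ 0 := by
      have := qq_pos q hq0 hq1 (l + 1)
      rw [qPoch_succ] at this
      intro h; rw [h] at this; simp at this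
    have nk1 : (1 : ℝ) - q * q ^ k ≠ 0 := by
      have := qq_pos q hq0 hq1 (k + 1)
      rw [qPoch_succ] at this
      intro h; rw [h] at this; simp at this
    field_simp
    ring
    
lemma key (q μ y : ℝ) (hq0 : 0 < q) (hq1 : q < 1) (m : ℕ) :
    ∑ l ∈ Finset.range (m + 1),
      qBinom q m l * (y ^ l * qPoch μ q l * qPoch y q (m - l)) = qPoch (μ * y) q m := by
  induction m with
  | zero => simp [qBinom_zero q hq0 hq1, qPoch_zero]
  | succ m ih =>
    rw [Finset.sum_range_succ']
    have hF0 : qBinom q (m + 1) 0 * (y ^ 0 * qPoch μ q 0 * qPoch y q (m + 1 - 0))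
        = qBinom q m 0 * (y ^ 0 * qPoch μ q 0 * qPoch y q (m + 1 - 0)) := by
      rw [qBinom_zero q hq0 hq1, qBinom_zero q hq0 hq1]
    rw [hF0]
    have hsplit : ∀ l ∈ Finset.range (m + 1),
        qBinom q (m + 1) (l + 1) * (y ^ (l + 1) * qPoch μ q (l + 1) * qPoch y q (m + 1 - (l + 1)))
        = qBinom q m (l + 1) * (y ^ (l + 1) * qPoch μ q (l + 1) * qPoch y q (m + 1 - (l + 1)))
          + q ^ (m - l) * qBinom q m l * (y ^ (l + 1) * qPoch μ q (l + 1) * qPoch y q (m - l)) := by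
      intro l hlmem
      have hl : l ≤ m := by simpa [Nat.lt_succ_iff] using Finset.mem_range.mp hlmem
      rw [qBinom_pascal q hq0 hq1 m l hl]
      have : m + 1 - (l + 1) = m - l := by omega
      rw [this]; ring
    rw [Finset.sum_congr rfl hsplit, Finset.sum_add_distrib]
    rw [add_right_comm]
    rw [← Finset.sum_range_succ' (fun k => qBinom q m k * (y ^ k * qPoch μ q k * qPoch y q (m + 1 - k))) (m + 1)]
    rw [Finset.sum_range_succ]
    rw [qBinom_gt q m (m + 1) (Nat.lt_succ_self m)]
    rw [mul_comm, mul_zero, add_zero, ← Finset.sum_add_distrib]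
    have hterm : ∀ l ∈ Finset.range (m + 1),
        qBinom q m l * (y ^ l * qPoch μ q l * qPoch y q (m + 1 - l))
          + q ^ (m - l) * qBinom q m l * (y ^ (l + 1) * qPoch μ q (l + 1) * qPoch y q (m - l))
        = (1 - μ * y * q ^ m) * (qBinom q m l * (y ^ l * qPoch μ q l * qPoch y q (m - l))) := by
      intro l hlmem
      have hl : l ≤ m := by simpa [Nat.lt_succ_iff] using Finset.mem_range.mp hlmem
      obtain ⟨k, rfl⟩ : ∃ k, m = l + k := ⟨m - l, by omega⟩
      have e1 : l + k + 1 - l = k + 1 := by omega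
      have e2 : l + k - l = k := by omega
      rw [e1, e2, qPoch_succ y q k, qPoch_succ μ q l, pow_add q l k]
      ring
    rw [Finset.sum_congr rfl hterm, ← Finset.mul_sum, ih, qPoch_succ]
    ring

theorem sum_phi_eq_one (q μ y : ℝ) (m : ℕ) (hq0 : 0 < q) (hq1 : q < 1)
    (hpoch : qPoch (μ * y) q m ≠ 0) :
    ∑ l ∈ Finset.range (m + 1), phi q μ y l m = 1 := by
  have h : ∀ l, phi q μ y l m
      = qBinom q m l * (y ^ l * qPoch μ q l * qPoch y q (m - l)) / qPoch (μ * y) q m := by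
    intro l; unfold phi; ring
  simp only [h]
  rw [← Finset.sum_div, key q μ y hq0 hq1 m, div_self hpoch]
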